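/- Optimal substructure: if a partition of p_1 ≥ ... ≥ p_M into contiguous segments P_1, ..., P_m assigned to stubs h_1 < ... < h_m achieves the overall minimal total expected code-word length, then for every k ≤ m the restriction to segments P_1, ..., P_k assigned to stubs h_1, ..., h_k achieves the minimal total cost among all partitions of P_1 ∪ ... ∪ P_k (as a contiguous prefix of the sorted list) into k contiguous segments assigned to those stubs. -/
import Mathlib


/-- Finite full binary trees with real-labeled leaves. -/
inductive BTree : Type
  | leaf : ℝ → BTree
  | node : BTree → BTree → BTree

/-- The list of (probability, depth) pairs of the leaves of a tree. -/
def BTree.leavesD : BTree → List (ℝ × ℕ)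
  | .leaf p => [(p, 0)]
  | .node l r => (l.leavesD ++ r.leavesD).map (fun x => (x.1, x.2 + 1))

/-- The multiset of leaf labels of a tree. -/
def BTree.leavesM (t : BTree) : Multiset ℝ := ↑(t.leavesD.map Prod.fst)

/-- Weighted external path length of a tree. -/
def BTree.cost (t : BTree) : ℝ := (t.leavesD.map (fun x => x.1 * (x.2 : ℝ))).sum

/-- Cost of assigning the multiset `S` to a free stub at level `h`:
`h * (sum S)` plus the minimal weighted external path length on `S`. -/
noncomputable def segCost (S : Multiset ℝ) (h : ℕ) : ℝ :=
  if S = 0 then 0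
  else sInf {c | ∃ T : BTree, T.leavesM = S ∧ c = (h : ℝ) * S.sum + T.cost}

/-- Cost of hanging an optimal tree on `p i, …, p j` from the stub at level `h k`. -/
noncomputable def Hc (p : ℕ → ℝ) (h : ℕ → ℕ) (i j k : ℕ) : ℝ :=
  segCost ((Finset.Icc i j).val.map p) (h k)

/-- The total cost of the partition with boundaries `b 0 ≤ b 1 ≤ ⋯ ≤ b k` assigned to
the first `k` stubs. -/
noncomputable def partCost (p : ℕ → ℝ) (h : ℕ → ℕ) (b : ℕ → ℕ) (k : ℕ) : ℝ :=
  ∑ t ∈ Finset.range k, Hc p h (b t + 1) (b (t + 1)) (t + 1)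

/-- optimal substructure: if a contiguous partition `b` of
`p 1 ≥ ⋯ ≥ p M` into `m` segments assigned to stubs `h 1 < ⋯ < h m` achieves the
minimal total cost, then for every `k ≤ m` its restriction to the first `k` segments
is optimal among all partitions of the same prefix into `k` contiguous segments. -/
theorem optimal_substructure
    (M m : ℕ) (p : ℕ → ℝ) (h : ℕ → ℕ)
    (hp : ∀ i ∈ Finset.Icc 1 M, 0 < p i)
    (hanti : ∀ i ∈ Finset.Icc 1 M, ∀ j ∈ Finset.Icc 1 M, i ≤ j → p j ≤ p i)
    (hh : ∀ k ∈ Finset.Icc 1 m, ∀ k' ∈ Finset.Icc 1 m, k < k' → h k < h k')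
    (b : ℕ → ℕ) (hbmono : Monotone b) (hb0 : b 0 = 0) (hbm : b m = M)
    (hopt : ∀ b' : ℕ → ℕ, Monotone b' → b' 0 = 0 → b' m = M →
      partCost p h b m ≤ partCost p h b' m) :
    ∀ k ≤ m, ∀ b' : ℕ → ℕ, Monotone b' → b' 0 = 0 → b' k = b k →
      partCost p h b k ≤ partCost p h b' k := by
  intro k hk b' hb'mono hb'0 hb'k
  set b'' : ℕ → ℕ := fun t => if t ≤ k then b' t else b t with hb''def
  have hb''k : ∀ t, k ≤ t → b'' t = b t := by
    intro t ht
    by_cases h' : t ≤ k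
    · have : t = k := le_antisymm h' ht
      simp [hb''def, this, hb'k]
    · simp [hb''def, h']
  have hb''mono : Monotone b'' := by
    intro s t hst
    by_cases hs : s ≤ k <;> by_cases ht : t ≤ k
    · simp only [hb''def, if_pos hs, if_pos ht]; exact hb'mono hst
    · simp only [hb''def, if_pos hs, if_neg ht]
      calc b' s ≤ b' k := hb'mono hs
        _ = b k := hb'k
        _ ≤ b t := hbmono (le_of_not_ge ht)
    · omega
    · simp only [hb''def, if_neg hs, if_neg ht]; exact hbmono hst
  have hb''0 : b'' 0 = 0 := by simp [hb''def, hb'0]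
  have hb''m : b'' m = M := by rw [hb''k m hk]; exact hbm
  have key := hopt b'' hb''mono hb''0 hb''m
  have split : ∀ c : ℕ → ℕ, partCost p h c m =
      partCost p h c k + ∑ t ∈ Finset.Ico k m, Hc p h (c t + 1) (c (t + 1)) (t + 1) := by
    intro c
    unfold partCost
    rw [Finset.range_eq_Ico, ← Finset.sum_Ico_consecutive _ (Nat.zero_le k) hk,
      ← Finset.range_eq_Ico]
  have tail_eq : ∑ t ∈ Finset.Ico k m, Hc p h (b'' t + 1) (b'' (t + 1)) (t + 1)
      = ∑ t ∈ Finset.Ico k m, Hc p h (b t + 1) (b (t + 1)) (t + 1) := by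
    refine Finset.sum_congr rfl fun t ht => ?_
    have ht' := Finset.mem_Ico.mp ht
    rw [hb''k t ht'.1, hb''k (t + 1) (le_trans ht'.1 (Nat.le_succ t))]
  have head_eq : partCost p h b'' k = partCost p h b' k := by
    unfold partCost
    refine Finset.sum_congr rfl fun t ht => ?_
    have ht' := Finset.mem_range.mp ht
    have h1 : t ≤ k := le_of_lt ht'
    have h2 : t + 1 ≤ k := ht'
    simp [hb''def, if_pos h1, if_pos h2]
  rw [split b, split b'', tail_eq, head_eq] at key
  linarith
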